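/- Let β : ℕ → ℝ satisfy 0 < β t < 1 for all t, let x₀ : ℝ, and define ᾱ t = ∏_{s ∈ Finset.range t} (1 - β s). Define probability measures on ℝ recursively by P 0 = Measure.dirac x₀ and P (t+1) = Measure.map (fun p : ℝ × ℝ => Real.sqrt (1 - β t) * p.1 + Real.sqrt (β t) * p.2) ((P t).prod (gaussianReal 0 1)). Then for every t, P t = gaussianReal (Real.sqrt (ᾱ t) * x₀) (1 - ᾱ t); i.e., the forward diffusion process started at x₀ has the closed-form marginal q(x_t | x_0) = N(√(ᾱ_t) x₀, (1 - ᾱ_t)). -/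

import Mathlib

open MeasureTheory ProbabilityTheory

open Real
open scoped NNReal ENNReal

private lemma pdf_symm {a c : ℝ} (hc : 0 < c) (h : a^2 + c = 1) (x y : ℝ) :
    gaussianPDFReal (a*x) c.toNNReal y * gaussianPDFReal 0 1 x
      = gaussianPDFReal (a*y) c.toNNReal x * gaussianPDFReal 0 1 y := by
  simp only [gaussianPDFReal, Real.coe_toNNReal _ hc.le, NNReal.coe_one, mul_one, sub_zero]
  have key : -(y - a*x)^2/(2*c) + -x^2/2 = -(x - a*y)^2/(2*c) + -y^2/2 := by
    field_simp
    ring_nf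
    nlinarith [sq_nonneg x, sq_nonneg y]
  rw [mul_mul_mul_comm, ← Real.exp_add, key, Real.exp_add, ← mul_mul_mul_comm]

private lemma map_shift_scale (y c : ℝ) :
    Measure.map (fun z : ℝ => c * z + y) (gaussianReal 0 1)
      = gaussianReal y (c^2 : ℝ).toNNReal := by
  have hco : (fun z : ℝ => c * z + y) = (fun z => z + y) ∘ (fun z => c * z) := by
    ext z; simp
  have hv : (NNReal.mk (c^2) (sq_nonneg c) : NNReal) * 1 = (c^2 : ℝ).toNNReal := by
    ext; simp [Real.coe_toNNReal _ (sq_nonneg c)]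
  rw [hco, ← Measure.map_map (measurable_id'.add_const _) (measurable_id'.const_mul c),
    show (fun z : ℝ => c * z) = (c * ·) from rfl,
    gaussianReal_map_const_mul (μ := 0) (v := 1) c, mul_zero, hv,
    gaussianReal_map_add_const, zero_add]

private lemma std_sum (a b : ℝ) (hb : b ≠ 0) (hab : a^2 + b^2 = 1) :
    Measure.map (fun p : ℝ × ℝ => a * p.1 + b * p.2)
      ((gaussianReal 0 1).prod (gaussianReal 0 1)) = gaussianReal 0 1 := by
  set vb : ℝ≥0 := (b^2 : ℝ).toNNReal with hvb
  have hb2 : (0:ℝ) < b^2 := by positivity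
  have hvb0 : vb ≠ 0 := by simp [hvb, Real.toNNReal_eq_zero, not_le, hb2, hb]
  have hL : Measurable (fun p : ℝ × ℝ => a * p.1 + b * p.2) := by fun_prop
  have hF : ∀ m : ℝ, Measurable (fun p : ℝ × ℝ => gaussianPDF (m*p.1) vb p.2) := by
    intro m
    have : (fun p : ℝ × ℝ => gaussianPDF (m*p.1) vb p.2)
        = fun p => gaussianPDF 0 vb (p.2 - m*p.1) := by
      ext p; unfold gaussianPDF gaussianPDFReal; norm_num
    rw [this]
    exact (measurable_gaussianPDF 0 vb).comp (measurable_snd.sub (measurable_fst.const_mul m))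
  ext s hs
  rw [Measure.map_apply hL hs, Measure.prod_apply (hL hs)]
  have hslice : ∀ x : ℝ, (gaussianReal 0 1)
      (Prod.mk x ⁻¹' ((fun p : ℝ × ℝ => a * p.1 + b * p.2) ⁻¹' s))
      = ∫⁻ y in s, gaussianPDF (a*x) vb y := by
    intro x
    have h1 : Measure.map (fun y : ℝ => b * y + a * x) (gaussianReal 0 1)
        = gaussianReal (a*x) vb := map_shift_scale (a*x) b
    have h2 : Prod.mk x ⁻¹' ((fun p : ℝ × ℝ => a * p.1 + b * p.2) ⁻¹' s)
        = (fun y : ℝ => b * y + a * x) ⁻¹' s := by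
      ext y; simp [add_comm]
    rw [h2, ← Measure.map_apply (by fun_prop) hs, h1,
      gaussianReal_of_var_ne_zero _ hvb0, withDensity_apply _ hs]
  simp_rw [hslice]
  have hmeas_inner : Measurable (fun x : ℝ => ∫⁻ y in s, gaussianPDF (a*x) vb y) :=
    (hF a).lintegral_prod_right' (ν := volume.restrict s)
  rw [gaussianReal_of_var_ne_zero 0 one_ne_zero,
    lintegral_withDensity_eq_lintegral_mul _ (measurable_gaussianPDF 0 1) hmeas_inner]
  simp only [Pi.mul_apply]
  have hpt : ∀ x : ℝ, gaussianPDF 0 1 x * ∫⁻ y in s, gaussianPDF (a*x) vb y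
      = ∫⁻ y in s, gaussianPDF 0 1 x * gaussianPDF (a*x) vb y :=
    fun x => (lintegral_const_mul _ (measurable_gaussianPDF _ _)).symm
  simp_rw [hpt]
  rw [lintegral_lintegral_swap
    (((measurable_gaussianPDF 0 1).comp measurable_fst).mul (hF a)).aemeasurable]
  have hin : ∀ y : ℝ, (∫⁻ x, gaussianPDF 0 1 x * gaussianPDF (a*x) vb y ∂volume)
      = gaussianPDF 0 1 y := by
    intro y
    have hp : ∀ x, gaussianPDF 0 1 x * gaussianPDF (a*x) vb y
        = gaussianPDF (a*y) vb x * gaussianPDF 0 1 y := by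
      intro x
      unfold gaussianPDF
      rw [← ENNReal.ofReal_mul (gaussianPDFReal_nonneg _ _ _),
        ← ENNReal.ofReal_mul (gaussianPDFReal_nonneg _ _ _),
        mul_comm (gaussianPDFReal 0 1 x), pdf_symm hb2 hab x y]
    simp_rw [hp]
    rw [lintegral_mul_const _ (measurable_gaussianPDF _ _),
      lintegral_gaussianPDF_eq_one _ hvb0, one_mul]
  simp_rw [hin]
  rw [withDensity_apply _ hs]

private lemma gen_step (a : ℝ) {b : ℝ} (hb : 0 < b) (μ : ℝ) (v : ℝ≥0) :
    Measure.map (fun p : ℝ × ℝ => a * p.1 + b * p.2)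
      ((gaussianReal μ v).prod (gaussianReal 0 1))
      = gaussianReal (a * μ) ((a^2 * v + b^2 : ℝ).toNNReal) := by
  have hg : gaussianReal μ v
      = Measure.map (fun x : ℝ => Real.sqrt v * x + μ) (gaussianReal 0 1) := by
    rw [map_shift_scale μ (Real.sqrt v), Real.sq_sqrt v.coe_nonneg, Real.toNNReal_coe]
  set r := Real.sqrt (a^2 * v + b^2) with hrdef
  have hpos : (0:ℝ) < a^2 * v + b^2 := by positivity
  have hr : 0 < r := Real.sqrt_pos.mpr hpos
  have hr2 : r^2 = a^2 * v + b^2 := Real.sq_sqrt hpos.le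
  have hb' : b / r ≠ 0 := div_ne_zero hb.ne' hr.ne'
  have hab' : (a * Real.sqrt v / r)^2 + (b/r)^2 = 1 := by
    rw [div_pow, div_pow, ← add_div, mul_pow, Real.sq_sqrt v.coe_nonneg, hr2]
    field_simp
  have hcomp : (fun p : ℝ × ℝ => a * p.1 + b * p.2)
        ∘ (Prod.map (fun x : ℝ => Real.sqrt v * x + μ) (id : ℝ → ℝ))
      = ((fun z : ℝ => z + a*μ) ∘ (fun z : ℝ => r * z))
        ∘ (fun p : ℝ × ℝ => (a * Real.sqrt v / r) * p.1 + (b/r) * p.2) := by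
    ext p
    simp only [Function.comp_apply, Prod.map_apply, Prod.map_fst, Prod.map_snd, id_eq]
    field_simp
    ring
  rw [hg, show gaussianReal 0 1 = Measure.map id (gaussianReal 0 1) from (Measure.map_id).symm,
    Measure.map_prod_map _ _ (by fun_prop) measurable_id,
    Measure.map_map (by fun_prop) (by fun_prop), hcomp, Measure.map_id,
    ← Measure.map_map (by fun_prop : Measurable ((fun z : ℝ => z + a*μ) ∘ (fun z : ℝ => r * z))) (by fun_prop),
    std_sum _ _ hb' hab',
    ← Measure.map_map (by fun_prop) (by fun_prop),
    show (fun z : ℝ => r * z) = (r * ·) from rfl,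
    gaussianReal_map_const_mul r, gaussianReal_map_add_const, mul_zero, zero_add]
  congr 1
  ext
  simp only [NNReal.coe_mul, NNReal.coe_mk, NNReal.coe_one, mul_one]
  rw [Real.coe_toNNReal _ hpos.le, hr2]

/-- The forward diffusion (noising) process `x_t = √(1-β_t) x_{t-1} + √(β_t) ε`,
`ε ~ N(0,1)`, started at `x₀`, has closed-form marginals
`q(x_t | x₀) = N(√(ᾱ_t) x₀, 1 - ᾱ_t)` where `ᾱ_t = ∏_{s<t} (1 - β_s)`. -/
theorem forward_diffusion_marginal (β : ℕ → ℝ) (hβ : ∀ t, 0 < β t ∧ β t < 1) (x₀ : ℝ)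
    (P : ℕ → Measure ℝ)
    (hP0 : P 0 = Measure.dirac x₀)
    (hPs : ∀ t, P (t + 1) = Measure.map
        (fun p : ℝ × ℝ => Real.sqrt (1 - β t) * p.1 + Real.sqrt (β t) * p.2)
        ((P t).prod (gaussianReal 0 1)))
    (t : ℕ) :
    P t = gaussianReal (Real.sqrt (∏ s ∈ Finset.range t, (1 - β s)) * x₀)
        (1 - ∏ s ∈ Finset.range t, (1 - β s)).toNNReal := by
  induction t with
  | zero => simp [hP0]
  | succ t ih =>
    have hβt := hβ t
    have hApos : 0 < ∏ s ∈ Finset.range t, (1 - β s) :=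
      Finset.prod_pos fun s _ => by linarith [(hβ s).2]
    have hA1 : ∏ s ∈ Finset.range t, (1 - β s) ≤ 1 :=
      Finset.prod_le_one (fun s _ => by linarith [(hβ s).2]) fun s _ => by linarith [(hβ s).1]
    set A := ∏ s ∈ Finset.range t, (1 - β s) with hA
    rw [hPs t, ih, gen_step (Real.sqrt (1 - β t)) (Real.sqrt_pos.mpr hβt.1) _ _]
    rw [Finset.prod_range_succ, ← hA]
    congr 1
    · rw [← mul_assoc, ← Real.sqrt_mul (by linarith) A, mul_comm (1 - β t) A]
    · congr 1
      rw [Real.sq_sqrt (by linarith : (0:ℝ) ≤ 1 - β t), Real.sq_sqrt hβt.1.le,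
        Real.coe_toNNReal _ (by linarith : (0:ℝ) ≤ 1 - A)]
      ring
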